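/- arXiv:1512.06438 — 3 statements merged into one kernel-verified Lean document; each statement's English description precedes it below -/
import Mathlib

section
/- Any 2^p-separated set contained in a subdiamond of diameter 2^q of D_{m,k} (with p ≤ q ≤ m) has cardinality at most k·(2k)^{q−p}. -/
open SimpleGraph

/-- One subdivision step: replace each edge of `G` by internally disjoint
paths of length 2 indexed by `ι`. -/
def diamondStep {V : Type} (ι : Type) (G : SimpleGraph V) :
    SimpleGraph (V ⊕ (G.edgeSet × ι)) where
  Adj x y :=
    match x, y with
    | Sum.inl u, Sum.inr e => u ∈ (e.1 : Sym2 V)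
    | Sum.inr e, Sum.inl u => u ∈ (e.1 : Sym2 V)
    | _, _ => False
  symm := ⟨by rintro (u | e) (v | f) h <;> simp_all⟩
  loopless := ⟨by rintro (u | e) h <;> simp_all⟩

/-- The diamond graphs `D_{n,k}` with branch index type `ι` (take `ι = Fin k`
for branching `k` and `ι = ℕ` for infinite branching). -/
def Diamond (ι : Type) : (n : ℕ) → Σ V : Type, SimpleGraph V
  | 0 => ⟨Bool, ⊤⟩
  | n + 1 => ⟨_, diamondStep ι (Diamond ι n).2⟩

/-- Vertex set of the diamond graph. -/
abbrev diamV (ι : Type) (n : ℕ) : Type := (Diamond ι n).1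

/-- The diamond graph as a `SimpleGraph`. -/
abbrev diamG (ι : Type) (n : ℕ) : SimpleGraph (diamV ι n) := (Diamond ι n).2

/-- The two original vertices: `diamOrig ι n false` is the bottom,
`diamOrig ι n true` is the top of `D_{n,k}`. -/
def diamOrig (ι : Type) : (n : ℕ) → Bool → diamV ι n
  | 0, b => b
  | n + 1, b => Sum.inl (diamOrig ι n b)

/-- The bottom vertex of the diamond. -/
def diamBottom (ι : Type) (n : ℕ) : diamV ι n := diamOrig ι n false

/-- The top vertex of the diamond. -/
def diamTop (ι : Type) (n : ℕ) : diamV ι n := diamOrig ι n true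

/-- The canonical injection of `D_{n,k}` into `D_{n+j,k}`: each vertex is sent to
the vertex it evolves into. -/
def diamLift (ι : Type) (n : ℕ) : (j : ℕ) → diamV ι n → diamV ι (n + j)
  | 0, x => x
  | j + 1, x => Sum.inl (diamLift ι n j x)

/-- The complete binary tree of depth `n`: vertices are binary strings of
length `≤ n`. -/
def treeV (n : ℕ) : Type := {l : List Bool // l.length ≤ n}

/-- The graph structure of the binary tree `T_n`: a vertex is adjacent to its
one-letter extensions. -/
def treeG (n : ℕ) : SimpleGraph (treeV n) where
  Adj u v := (∃ b, v.1 = b :: u.1) ∨ (∃ b, u.1 = b :: v.1)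
  symm := by tauto
  loopless := ⟨by
    rintro ⟨l, hl⟩ (⟨b, hb⟩ | ⟨b, hb⟩) <;>
      simpa using congrArg List.length hb⟩

/-- The root of the binary tree. -/
def treeRoot (n : ℕ) : treeV n := ⟨[], by simp⟩

/-- The midpoint vertex of one of the `k` paths of length 2 replacing the edge
`uv` at the next construction step. -/
def diamMid (ι : Type) {j : ℕ} {u v : diamV ι j} (h : (diamG ι j).Adj u v) (i : ι) :
    diamV ι (j + 1) :=
  Sum.inr (⟨s(u, v), (diamG ι j).mem_edgeSet.mpr h⟩, i)

lemma diamMid_adj_left (ι : Type) {j : ℕ} {u v : diamV ι j}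
    (h : (diamG ι j).Adj u v) (i : ι) :
    (diamG ι (j + 1)).Adj (Sum.inl u) (diamMid ι h i) := by
  show u ∈ (s(u,v) : Sym2 (diamV ι j))
  exact Sym2.mem_mk_left u v

lemma diamMid_adj_right (ι : Type) {j : ℕ} {u v : diamV ι j}
    (h : (diamG ι j).Adj u v) (i : ι) :
    (diamG ι (j + 1)).Adj (diamMid ι h i) (Sum.inl v) := by
  show v ∈ (s(u,v) : Sym2 (diamV ι j))
  exact Sym2.mem_mk_right u v

/-- The graph homomorphism of `D_{q,k}` onto the subdiamond of `D_{j+q,k}` that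
evolved from the edge `uv` of `D_{j,k}`. Its range is that subdiamond. -/
def subEmbed (ι : Type) {j : ℕ} {u v : diamV ι j} (h : (diamG ι j).Adj u v) :
    (q : ℕ) → (diamG ι q) →g (diamG ι (j + q))
  | 0 =>
    ⟨fun b => bif b then u else v, by
      rintro a b hab
      have hab' : a ≠ b := hab
      cases a <;> cases b
      · exact absurd rfl hab'
      · exact h.symm
      · exact h
      · exact absurd rfl hab'⟩
  | q + 1 =>
    let f := subEmbed ι h q
    ⟨Sum.map f (fun p => (f.mapEdgeSet p.1, p.2)), by
      rintro (a | e) (b | e') hab <;> try exact hab.elim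
      · show f a ∈ (Sym2.map f e'.1.1 : Sym2 (diamV ι (j + q)))
        exact Sym2.mem_map.mpr ⟨_, hab, rfl⟩
      · show f b ∈ (Sym2.map f e.1.1 : Sym2 (diamV ι (j + q)))
        exact Sym2.mem_map.mpr ⟨_, hab, rfl⟩⟩

section Aux
variable {ι : Type}

instance diamV.finite (ι : Type) [Finite ι] : ∀ n, Finite (diamV ι n)
  | 0 => inferInstanceAs (Finite Bool)
  | n + 1 =>
    have : Finite (diamV ι n) := diamV.finite ι n
    inferInstanceAs (Finite ((diamV ι n) ⊕ ((diamG ι n).edgeSet × ι)))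

/-- Cast between diamond levels. -/
def castV (ι : Type) {a b : ℕ} (h : a = b) (x : diamV ι a) : diamV ι b := h ▸ x

/-- Cast between edge sets of diamond levels. -/
def castE (ι : Type) {a b : ℕ} (h : a = b) (e : (diamG ι a).edgeSet) :
    (diamG ι b).edgeSet := h ▸ e

@[simp] lemma castV_rfl {a : ℕ} (h : a = a) (x : diamV ι a) : castV ι h x = x := rfl

lemma castV_castV {a b c : ℕ} (h1 : a = b) (h2 : b = c) (x : diamV ι a) :
    castV ι h2 (castV ι h1 x) = castV ι (h1.trans h2) x := by subst h1; subst h2; rfl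

lemma castV_inj {a b : ℕ} (h : a = b) {x y : diamV ι a}
    (hxy : castV ι h x = castV ι h y) : x = y := by subst h; exact hxy

lemma castV_inl {a b : ℕ} (h : a = b) (h' : a + 1 = b + 1) (x : diamV ι a) :
    castV ι h' (Sum.inl x) = Sum.inl (castV ι h x) := by subst h; rfl

lemma castV_inr {a b : ℕ} (h : a = b) (h' : a + 1 = b + 1)
    (e : (diamG ι a).edgeSet) (i : ι) :
    castV ι h' (Sum.inr (e, i)) = Sum.inr (castE ι h e, i) := by subst h; rfl

lemma castE_val {a b : ℕ} (h : a = b) (e : (diamG ι a).edgeSet) :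
    (castE ι h e).1 = Sym2.map (castV ι h) e.1 := by
  subst h
  show e.1 = Sym2.map (fun x => x) e.1
  have : Sym2.map (fun x : diamV ι a => x) e.1 = Sym2.map id e.1 := rfl
  rw [this, Sym2.map_id]; rfl

lemma castV_dist {a b : ℕ} (h : a = b) (x y : diamV ι a) :
    (diamG ι b).dist (castV ι h x) (castV ι h y) = (diamG ι a).dist x y := by
  subst h; rfl

lemma castV_subEmbed {j : ℕ} {u v : diamV ι j} (h : (diamG ι j).Adj u v)
    {q1 q2 : ℕ} (e : q1 = q2) (e' : j + q1 = j + q2) (x : diamV ι q1) :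
    subEmbed ι h q2 (castV ι e x) = castV ι e' (subEmbed ι h q1 x) := by
  subst e; rfl

end Aux
section Aux2
variable {ι : Type}

/-- The unique edge of `D₀`. -/
def theEdge0 (ι : Type) : (diamG ι 0).edgeSet :=
  ⟨s(false, true), show (⊤ : SimpleGraph Bool).Adj false true by simp⟩

lemma edge0_unique (e : (diamG ι 0).edgeSet) : e = theEdge0 ι := by
  obtain ⟨z, hz⟩ := e
  apply Subtype.ext
  induction z using Sym2.ind with
  | _ a b =>
    have hab : a ≠ b := by
      have : (⊤ : SimpleGraph Bool).Adj a b := hz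
      exact this.ne
    cases a <;> cases b <;> simp_all [theEdge0, Sym2.eq_swap] <;> exact Sym2.eq_swap

/-- The midpoint vertices of `D₁`. -/
def mid1 (ι : Type) (i : ι) : diamV ι 1 := Sum.inr (theEdge0 ι, i)

lemma cedgeAdj (ι : Type) (i : ι) (b : Bool) :
    (diamG ι 1).Adj (Sum.inl b) (mid1 ι i) := by
  show b ∈ (s(false, true) : Sym2 Bool)
  cases b <;> simp

lemma subEmbed_orig {j : ℕ} {u v : diamV ι j} (h : (diamG ι j).Adj u v) :
    ∀ (q : ℕ) (b : Bool),
      subEmbed ι h q (diamOrig ι q b) = diamLift ι j q (bif b then u else v)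
  | 0, b => by cases b <;> rfl
  | q + 1, b => congrArg Sum.inl (subEmbed_orig h q b)

lemma stepAdj_left {V : Type} {G : SimpleGraph V} (e : G.edgeSet) (i : ι) {x : V}
    (hx : x ∈ (e.1 : Sym2 V)) : (diamondStep ι G).Adj (Sum.inl x) (Sum.inr (e, i)) := hx

lemma stepAdj_right {V : Type} {G : SimpleGraph V} (e : G.edgeSet) (i : ι) {x : V}
    (hx : x ∈ (e.1 : Sym2 V)) : (diamondStep ι G).Adj (Sum.inr (e, i)) (Sum.inl x) := hx

/-- Lift a walk through one subdivision step, doubling its length. -/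
def liftWalk {V : Type} {G : SimpleGraph V} (i : ι) :
    {a b : V} → (w : G.Walk a b) →
      (diamondStep ι G).Walk (Sum.inl a) (Sum.inl b)
  | _, _, SimpleGraph.Walk.nil => SimpleGraph.Walk.nil
  | a, _, SimpleGraph.Walk.cons (v := c) h p =>
      SimpleGraph.Walk.cons
        (stepAdj_left (⟨s(a, c), h⟩ : G.edgeSet) i (Sym2.mem_mk_left a c))
        (SimpleGraph.Walk.cons
          (stepAdj_right (⟨s(a, c), h⟩ : G.edgeSet) i (Sym2.mem_mk_right a c))
          (liftWalk i p))

lemma length_liftWalk {V : Type} {G : SimpleGraph V} (i : ι) :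
    ∀ {a b : V} (w : G.Walk a b), (liftWalk (ι := ι) i w).length = 2 * w.length
  | _, _, SimpleGraph.Walk.nil => by simp [liftWalk]
  | _, _, SimpleGraph.Walk.cons h p => by
      simp [liftWalk, length_liftWalk i p]; omega

end Aux2
section Aux3
variable {ι : Type} [Nonempty ι]

/-- Specialization of `liftWalk` to diamond graphs. -/
def liftWalkD (i : ι) {n : ℕ} {a b : diamV ι n} (w : (diamG ι n).Walk a b) :
    (diamG ι (n + 1)).Walk (Sum.inl a) (Sum.inl b) := liftWalk i w

omit [Nonempty ι] in
@[simp] lemma length_liftWalkD (i : ι) {n : ℕ} {a b : diamV ι n}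
    (w : (diamG ι n).Walk a b) : (liftWalkD i w).length = 2 * w.length :=
  length_liftWalk i w

lemma geoW : ∀ (n : ℕ) {a b : diamV ι n}, (diamG ι n).Adj a b →
    (∃ (w1 : (diamG ι n).Walk a (diamOrig ι n false))
       (w2 : (diamG ι n).Walk b (diamOrig ι n true)),
        w1.length + w2.length ≤ 2 ^ n - 1) ∨
    (∃ (w1 : (diamG ι n).Walk b (diamOrig ι n false))
       (w2 : (diamG ι n).Walk a (diamOrig ι n true)),
        w1.length + w2.length ≤ 2 ^ n - 1)
  | 0, a, b, hab => by
    have hne : a ≠ b := hab.ne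
    cases a <;> cases b
    · exact absurd rfl hne
    · exact Or.inl ⟨SimpleGraph.Walk.nil, SimpleGraph.Walk.nil, le_of_eq rfl⟩
    · exact Or.inr ⟨SimpleGraph.Walk.nil, SimpleGraph.Walk.nil, le_of_eq rfl⟩
    · exact absurd rfl hne
  | n + 1, a, b, hab => by
    have i0 : ι := Classical.arbitrary ι
    have key : ∀ (e : (diamG ι n).edgeSet) (i : ι) (x : diamV ι n),
        x ∈ (e.1 : Sym2 (diamV ι n)) →
        (∃ (w1 : (diamG ι (n+1)).Walk (Sum.inl x) (diamOrig ι (n+1) false))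
           (w2 : (diamG ι (n+1)).Walk (Sum.inr (e, i)) (diamOrig ι (n+1) true)),
            w1.length + w2.length ≤ 2 ^ (n+1) - 1) ∨
        (∃ (w1 : (diamG ι (n+1)).Walk (Sum.inr (e, i)) (diamOrig ι (n+1) false))
           (w2 : (diamG ι (n+1)).Walk (Sum.inl x) (diamOrig ι (n+1) true)),
            w1.length + w2.length ≤ 2 ^ (n+1) - 1) := by
      intro e i x hx
      obtain ⟨y, hy⟩ := Sym2.mem_iff_exists.mp hx
      have hadj : (diamG ι n).Adj x y := by
        have := e.2
        rw [hy] at this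
        exact this
      have hyy : y ∈ (e.1 : Sym2 (diamV ι n)) := by rw [hy]; exact Sym2.mem_mk_right x y
      have hone : 1 ≤ 2 ^ n := Nat.one_le_two_pow
      rcases geoW n hadj with ⟨wx, wy, hw⟩ | ⟨wy, wx, hw⟩
      · refine Or.inl ⟨liftWalkD i0 wx,
          SimpleGraph.Walk.cons (stepAdj_right e i hyy) (liftWalkD i0 wy), ?_⟩
        show (liftWalkD i0 wx).length + ((liftWalkD i0 wy).length + 1) ≤ 2 ^ (n+1) - 1
        rw [length_liftWalkD, length_liftWalkD]
        omega
      · refine Or.inr ⟨SimpleGraph.Walk.cons (stepAdj_right e i hyy) (liftWalkD i0 wy),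
          liftWalkD i0 wx, ?_⟩
        show ((liftWalkD i0 wy).length + 1) + (liftWalkD i0 wx).length ≤ 2 ^ (n+1) - 1
        rw [length_liftWalkD, length_liftWalkD]
        omega
    match a, b, hab with
    | Sum.inl x, Sum.inr (e, i), hab => exact key e i x hab
    | Sum.inr (e, i), Sum.inl x, hab =>
      rcases key e i x hab with ⟨w1, w2, hw⟩ | ⟨w1, w2, hw⟩
      · exact Or.inr ⟨w1, w2, hw⟩
      · exact Or.inl ⟨w1, w2, hw⟩

lemma sumW : ∀ (n : ℕ) (x : diamV ι n),
    ∃ (w1 : (diamG ι n).Walk x (diamOrig ι n false))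
      (w2 : (diamG ι n).Walk x (diamOrig ι n true)),
      w1.length + w2.length ≤ 2 ^ n
  | 0, x => by
    cases x
    · exact ⟨SimpleGraph.Walk.nil,
        SimpleGraph.Walk.cons (show (⊤ : SimpleGraph Bool).Adj false true by simp)
          SimpleGraph.Walk.nil, le_of_eq rfl⟩
    · exact ⟨SimpleGraph.Walk.cons (show (⊤ : SimpleGraph Bool).Adj true false by simp)
          SimpleGraph.Walk.nil, SimpleGraph.Walk.nil, le_of_eq rfl⟩
  | n + 1, x => by
    have i0 : ι := Classical.arbitrary ι
    match x with
    | Sum.inl z =>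
      obtain ⟨w1, w2, hw⟩ := sumW n z
      exact ⟨liftWalkD i0 w1, liftWalkD i0 w2, by
        show (liftWalkD i0 w1).length + (liftWalkD i0 w2).length ≤ 2 ^ (n + 1)
        rw [length_liftWalkD, length_liftWalkD]; omega⟩
    | Sum.inr (e, i) =>
      obtain ⟨a, b, hab⟩ : ∃ a b, (e.1 : Sym2 (diamV ι n)) = s(a, b) := by
        induction e.1 using Sym2.ind with
        | _ a b => exact ⟨a, b, rfl⟩
      have ha : a ∈ (e.1 : Sym2 (diamV ι n)) := by rw [hab]; exact Sym2.mem_mk_left a b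
      have hb : b ∈ (e.1 : Sym2 (diamV ι n)) := by rw [hab]; exact Sym2.mem_mk_right a b
      have hadj : (diamG ι n).Adj a b := by
        have := e.2; rw [hab] at this; exact this
      have hone : 1 ≤ 2 ^ n := Nat.one_le_two_pow
      rcases geoW n hadj with ⟨wa, wb, hw⟩ | ⟨wb, wa, hw⟩
      · exact ⟨SimpleGraph.Walk.cons (stepAdj_right e i ha) (liftWalkD i0 wa),
          SimpleGraph.Walk.cons (stepAdj_right e i hb) (liftWalkD i0 wb),
          by show ((liftWalkD i0 wa).length + 1) + ((liftWalkD i0 wb).length + 1) ≤ 2 ^ (n + 1)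
             rw [length_liftWalkD, length_liftWalkD]; omega⟩
      · exact ⟨SimpleGraph.Walk.cons (stepAdj_right e i hb) (liftWalkD i0 wb),
          SimpleGraph.Walk.cons (stepAdj_right e i ha) (liftWalkD i0 wa),
          by show ((liftWalkD i0 wb).length + 1) + ((liftWalkD i0 wa).length + 1) ≤ 2 ^ (n + 1)
             rw [length_liftWalkD, length_liftWalkD]; omega⟩

lemma endW (n : ℕ) (x : diamV ι n) (b : Bool) (hx : x ≠ diamOrig ι n (!b)) :
    ∃ w : (diamG ι n).Walk x (diamOrig ι n b), w.length ≤ 2 ^ n - 1 := by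
  obtain ⟨w1, w2, hw⟩ := sumW n x
  cases b
  · refine ⟨w1, ?_⟩
    have : w2.length ≠ 0 := fun h0 => hx (SimpleGraph.Walk.eq_of_length_eq_zero h0)
    omega
  · refine ⟨w2, ?_⟩
    have : w1.length ≠ 0 := fun h0 => hx (SimpleGraph.Walk.eq_of_length_eq_zero h0)
    omega

end Aux3
section Aux4
variable {ι : Type} [Nonempty ι]

lemma coverAll : ∀ q : ℕ,
    (∀ x : diamV ι (1 + q), ∃ (i : ι) (b : Bool) (y : diamV ι q),
        subEmbed ι (cedgeAdj ι i b) q y = x) ∧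
    (∀ e : (diamG ι (1 + q)).edgeSet, ∃ (i : ι) (b : Bool)
        (e' : (diamG ι q).edgeSet),
        (subEmbed ι (cedgeAdj ι i b) q).mapEdgeSet e' = e)
  | 0 => by
    constructor
    · intro x
      match x with
      | Sum.inl b => exact ⟨Classical.arbitrary ι, b, true, rfl⟩
      | Sum.inr (e0, i) =>
        refine ⟨i, true, false, ?_⟩
        show mid1 ι i = Sum.inr (e0, i)
        rw [edge0_unique e0]
        rfl
    · intro e
      obtain ⟨z, hz⟩ := e
      induction z using Sym2.ind with
      | _ x y =>
        match x, y, hz with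
        | Sum.inl b, Sum.inr (e0, i), hz =>
          refine ⟨i, b, ⟨s(true, false), show (⊤ : SimpleGraph Bool).Adj true false by simp⟩, ?_⟩
          apply Subtype.ext
          show Sym2.map _ s(true, false) = s(Sum.inl b, Sum.inr (e0, i))
          rw [edge0_unique e0]
          rfl
        | Sum.inr (e0, i), Sum.inl b, hz =>
          refine ⟨i, b, ⟨s(true, false), show (⊤ : SimpleGraph Bool).Adj true false by simp⟩, ?_⟩
          apply Subtype.ext
          show Sym2.map _ s(true, false) = s(Sum.inr (e0, i), Sum.inl b)
          rw [edge0_unique e0, Sym2.eq_swap]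
          rfl
  | q + 1 => by
    obtain ⟨hv, he⟩ := coverAll q
    constructor
    · intro x
      match x with
      | Sum.inl w =>
        obtain ⟨i, b, y, hy⟩ := hv w
        exact ⟨i, b, Sum.inl y, congrArg Sum.inl hy⟩
      | Sum.inr (e1, i') =>
        obtain ⟨i, b, e1', he1⟩ := he e1
        exact ⟨i, b, Sum.inr (e1', i'),
          congrArg (fun t => Sum.inr (t, i')) he1⟩
    · intro e
      obtain ⟨z, hz⟩ := e
      induction z using Sym2.ind with
      | _ x y =>
        have main : ∀ (w : diamV ι (1 + q)) (e1 : (diamG ι (1 + q)).edgeSet)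
            (i' : ι), w ∈ (e1.1 : Sym2 (diamV ι (1 + q))) →
            ∃ (i : ι) (b : Bool) (e' : (diamG ι (q + 1)).edgeSet),
              ((subEmbed ι (cedgeAdj ι i b) (q + 1)).mapEdgeSet e').1
                = s(Sum.inl w, Sum.inr (e1, i')) := by
          intro w e1 i' hw
          obtain ⟨i, b, e1', he1⟩ := he e1
          rw [← he1] at hw
          obtain ⟨y', hy', hfy⟩ := Sym2.mem_map.mp hw
          refine ⟨i, b, ⟨s(Sum.inl y', Sum.inr (e1', i')), hy'⟩, ?_⟩
          show Sym2.map _ s(Sum.inl y', Sum.inr (e1', i')) = _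
          show s(Sum.inl (subEmbed ι (cedgeAdj ι i b) q y'),
              Sum.inr ((subEmbed ι (cedgeAdj ι i b) q).mapEdgeSet e1', i')) = _
          rw [hfy, he1]
        match x, y, hz with
        | Sum.inl w, Sum.inr (e1, i'), hz =>
          obtain ⟨i, b, e', he'⟩ := main w e1 i' hz
          exact ⟨i, b, e', Subtype.ext he'⟩
        | Sum.inr (e1, i'), Sum.inl w, hz =>
          obtain ⟨i, b, e', he'⟩ := main w e1 i' hz
          refine ⟨i, b, e', Subtype.ext ?_⟩
          rw [he', Sym2.eq_swap]
          rfl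
end Aux4
section Aux5
variable {ι : Type}

/-- The child edge of a subdiamond: image in `D_{j+1}` of the edge
`(inl b, mid1 i)` of `D₁` under `subEmbed h 1`. -/
lemma cImg {j : ℕ} {u v : diamV ι j} (h : (diamG ι j).Adj u v) (i : ι) (b : Bool) :
    (diamG ι (j + 1)).Adj (subEmbed ι h 1 (Sum.inl b)) (subEmbed ι h 1 (mid1 ι i)) :=
  (subEmbed ι h 1).map_adj (cedgeAdj ι i b)

lemma comp {j : ℕ} {u v : diamV ι j} (h : (diamG ι j).Adj u v) (i : ι) (b : Bool) :
    ∀ (q : ℕ) (y : diamV ι q),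
      subEmbed ι h (1 + q) (subEmbed ι (cedgeAdj ι i b) q y)
        = castV ι (by omega : (j + 1) + q = j + (1 + q))
            (subEmbed ι (cImg h i b) q y)
  | 0, y => by cases y <;> rfl
  | q + 1, y => by
    match y with
    | Sum.inl z =>
      exact (congrArg Sum.inl (comp h i b q z)).trans
        (castV_inl (by omega) (by omega) _).symm
    | Sum.inr (e, i') =>
      have hedge : (subEmbed ι h (1 + q)).mapEdgeSet
            ((subEmbed ι (cedgeAdj ι i b) q).mapEdgeSet e)
          = castE ι (by omega : (j + 1) + q = j + (1 + q))
            ((subEmbed ι (cImg h i b) q).mapEdgeSet e) := by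
        apply Subtype.ext
        show Sym2.map _ (Sym2.map _ e.1) = (castE ι _ _).1
        rw [castE_val]
        show _ = Sym2.map _ (Sym2.map _ e.1)
        rw [Sym2.map_map, Sym2.map_map]
        exact congrArg (fun f => Sym2.map f e.1)
          (funext fun z => comp h i b q z)
      exact (congrArg (fun t => Sum.inr (t, i')) hedge).trans
        (castV_inr (by omega) (by omega) _ i').symm
end Aux5
section Aux6

lemma ncard_le_sum_of_subset_biUnion {α C : Type} [Finite α] [DecidableEq C]
    (F : Finset C) (T : C → Set α) :
    ∀ S : Set α, (S ⊆ ⋃ c ∈ F, T c) → S.ncard ≤ ∑ c ∈ F, (T c).ncard := by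
  classical
  induction F using Finset.induction_on with
  | empty =>
    intro S hS
    simp only [Finset.notMem_empty, Set.iUnion_of_empty, Set.iUnion_empty,
      Set.subset_empty_iff] at hS
    simp [hS]
  | insert a F ha IH =>
    intro S hS
    have h1 : S ⊆ T a ∪ (S \ T a) := by
      intro x hx
      by_cases hxa : x ∈ T a
      · exact Or.inl hxa
      · exact Or.inr ⟨hx, hxa⟩
    have h2 : S \ T a ⊆ ⋃ c ∈ F, T c := by
      intro x hx
      have := hS hx.1
      simp only [Set.mem_iUnion, Finset.mem_insert] at this ⊢
      obtain ⟨c, hc, hxc⟩ := this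
      rcases hc with rfl | hc
      · exact absurd hxc hx.2
      · exact ⟨c, hc, hxc⟩
    calc S.ncard ≤ (T a ∪ (S \ T a)).ncard := Set.ncard_le_ncard h1 (Set.toFinite _)
      _ ≤ (T a).ncard + (S \ T a).ncard := Set.ncard_union_le _ _
      _ ≤ (T a).ncard + ∑ c ∈ F, (T c).ncard := by
          have := IH _ h2; omega
      _ = ∑ c ∈ insert a F, (T c).ncard := by rw [Finset.sum_insert ha]

end Aux6
section Main
open SimpleGraph

lemma main_lemma (k : ℕ) (hk : 2 ≤ k) :
    ∀ (q : ℕ), ∀ p ≤ q, ∀ (j : ℕ) (u v : diamV (Fin k) j)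
      (h : (diamG (Fin k) j).Adj u v) (S : Set (diamV (Fin k) (j + q))),
      S ⊆ Set.range (subEmbed (Fin k) h q) →
      (∀ x ∈ S, ∀ y ∈ S, x ≠ y → 2 ^ p ≤ (diamG (Fin k) (j + q)).dist x y) →
      Nat.card S ≤ k * (2 * k) ^ (q - p) := by
  haveI : Nonempty (Fin k) := ⟨⟨0, by omega⟩⟩
  intro q
  induction q with
  | zero =>
    intro p hp j u v h S hsub hsep
    have hp0 : p = 0 := Nat.le_zero.mp hp
    subst hp0
    have hS2 : S ⊆ {u, v} := by
      intro x hx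
      obtain ⟨b, rfl⟩ := hsub hx
      cases b
      · exact Set.mem_insert_iff.mpr (Or.inr rfl)
      · exact Set.mem_insert_iff.mpr (Or.inl rfl)
    rw [Nat.card_coe_set_eq]
    have h2 : ({u, v} : Set (diamV (Fin k) (j + 0))).ncard ≤ 2 := by
      have := Set.ncard_insert_le u ({v} : Set (diamV (Fin k) (j + 0)))
      simpa using this
    have h3 := Set.ncard_le_ncard hS2 (Set.toFinite _)
    simp only [Nat.sub_zero, pow_zero, mul_one]
    omega
  | succ q IH =>
    intro p hp j u v h S hsub hsep
    have hq1 : (1 : ℕ) + q = q + 1 := by omega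
    have e3 : (j + 1) + q = j + (q + 1) := by omega
    have cover : ∀ s ∈ S, ∃ (i : Fin k) (b : Bool) (y : diamV (Fin k) q),
        s = castV (Fin k) e3 (subEmbed (Fin k) (cImg h i b) q y) := by
      intro s hs
      obtain ⟨x, hx⟩ := hsub hs
      obtain ⟨i, b, y, hy⟩ := (coverAll q).1 (castV (Fin k) hq1.symm x)
      refine ⟨i, b, y, ?_⟩
      calc s = subEmbed (Fin k) h (q + 1) x := hx.symm
        _ = subEmbed (Fin k) h (q + 1)
              (castV (Fin k) hq1 (castV (Fin k) hq1.symm x)) := by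
            rw [castV_castV, castV_rfl]
        _ = castV (Fin k) (by omega)
              (subEmbed (Fin k) h (1 + q) (castV (Fin k) hq1.symm x)) :=
            castV_subEmbed h hq1 (show j + (1 + q) = j + (q + 1) by omega) _
        _ = castV (Fin k) (by omega)
              (subEmbed (Fin k) h (1 + q)
                (subEmbed (Fin k) (cedgeAdj (Fin k) i b) q y)) := by rw [hy]
        _ = castV (Fin k) (show j + (1 + q) = j + (q + 1) by omega)
              (castV (Fin k) (show (j + 1) + q = j + (1 + q) by omega)
                (subEmbed (Fin k) (cImg h i b) q y)) := by rw [comp]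
        _ = castV (Fin k) e3 (subEmbed (Fin k) (cImg h i b) q y) := by
            rw [castV_castV]
    by_cases hple : p ≤ q
    · -- recursive case: split into the 2k child subdiamonds
      set T : Fin k × Bool → Set (diamV (Fin k) ((j + 1) + q)) := fun c =>
        (castV (Fin k) e3) ⁻¹' S ∩
          Set.range (subEmbed (Fin k) (cImg h c.1 c.2) q) with hT
      have hTcard : ∀ c, (T c).ncard ≤ k * (2 * k) ^ (q - p) := by
        intro c
        rw [← Nat.card_coe_set_eq]
        apply IH p hple (j + 1) _ _ (cImg h c.1 c.2) (T c) Set.inter_subset_right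
        intro a ha b hb hab
        have hd := hsep _ ha.1 _ hb.1 (fun heq => hab (castV_inj e3 heq))
        rwa [castV_dist] at hd
      have hcov2 : S ⊆ ⋃ c ∈ (Finset.univ : Finset (Fin k × Bool)),
          castV (Fin k) e3 '' T c := by
        intro s hs
        obtain ⟨i, b, y, hy⟩ := cover s hs
        simp only [Set.mem_iUnion]
        refine ⟨(i, b), Finset.mem_univ _,
          ⟨subEmbed (Fin k) (cImg h i b) q y, ⟨?_, ⟨y, rfl⟩⟩, hy.symm⟩⟩
        show castV (Fin k) e3 _ ∈ S
        rw [← hy]; exact hs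
      have hinj : Function.Injective (castV (Fin k) e3) := fun a b => castV_inj e3
      calc Nat.card S = S.ncard := Nat.card_coe_set_eq S
        _ ≤ ∑ c ∈ (Finset.univ : Finset (Fin k × Bool)),
              (castV (Fin k) e3 '' T c).ncard :=
            ncard_le_sum_of_subset_biUnion _ _ S hcov2
        _ = ∑ c ∈ (Finset.univ : Finset (Fin k × Bool)), (T c).ncard := by
            apply Finset.sum_congr rfl
            intro c _
            exact Set.ncard_image_of_injective _ hinj
        _ ≤ ∑ _c ∈ (Finset.univ : Finset (Fin k × Bool)),
              k * (2 * k) ^ (q - p) :=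
            Finset.sum_le_sum (fun c _ => hTcard c)
        _ = (k * 2) * (k * (2 * k) ^ (q - p)) := by
            rw [Finset.sum_const]
            simp [Finset.card_univ, mul_assoc, mul_comm, mul_left_comm]
        _ = k * (2 * k) ^ (q + 1 - p) := by
            have hstep : q + 1 - p = (q - p) + 1 := by omega
            rw [hstep, pow_succ]
            ring
    · -- diameter case: p = q + 1
      have hpq1 : p = q + 1 := by omega
      subst hpq1
      -- the two endpoints of the subdiamond
      set U : Bool → diamV (Fin k) (j + (q + 1)) := fun b =>
        castV (Fin k) e3 (diamLift (Fin k) (j + 1) q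
          (subEmbed (Fin k) h 1 (Sum.inl b))) with hU
      -- distance bounds via walks
      have keyE : ∀ (i : Fin k) (b : Bool) (y : diamV (Fin k) q),
          (diamG (Fin k) (j + (q + 1))).dist
            (castV (Fin k) e3 (subEmbed (Fin k) (cImg h i b) q y)) (U b)
            ≤ 2 ^ q := by
        intro i b y
        obtain ⟨w1, w2, hw⟩ := sumW q y
        rw [hU, castV_dist]
        calc (diamG (Fin k) ((j + 1) + q)).dist _ _
            ≤ ((w2.map (subEmbed (Fin k) (cImg h i b) q)).copy rfl
                (subEmbed_orig (cImg h i b) q true)).length :=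
              SimpleGraph.dist_le _
          _ ≤ 2 ^ q := by
              rw [SimpleGraph.Walk.length_copy, SimpleGraph.Walk.length_map]
              omega
      have keyM : ∀ (i : Fin k) (b : Bool) (y : diamV (Fin k) q),
          ∃ w : (diamG (Fin k) ((j + 1) + q)).Walk
            (subEmbed (Fin k) (cImg h i b) q y)
            (diamLift (Fin k) (j + 1) q (subEmbed (Fin k) h 1 (mid1 (Fin k) i))),
            w.length ≤ 2 ^ q ∧
              (y ≠ diamOrig (Fin k) q true → w.length ≤ 2 ^ q - 1) := by
        intro i b y
        by_cases hy : y = diamOrig (Fin k) q true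
        · obtain ⟨w1, w2, hw⟩ := sumW q y
          refine ⟨(w1.map (subEmbed (Fin k) (cImg h i b) q)).copy rfl
            (subEmbed_orig (cImg h i b) q false), ?_, fun hc => absurd hy hc⟩
          rw [SimpleGraph.Walk.length_copy, SimpleGraph.Walk.length_map]
          omega
        · obtain ⟨w, hwl⟩ := endW q y false (by simpa using hy)
          refine ⟨(w.map (subEmbed (Fin k) (cImg h i b) q)).copy rfl
            (subEmbed_orig (cImg h i b) q false), ?_, fun _ => ?_⟩
          · rw [SimpleGraph.Walk.length_copy, SimpleGraph.Walk.length_map]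
            exact le_trans hwl (Nat.sub_le _ _)
          · rw [SimpleGraph.Walk.length_copy, SimpleGraph.Walk.length_map]
            exact hwl
      -- if two points lie in the same branch, they are the endpoints
      have branch2 : ∀ s ∈ S, ∀ t ∈ S, s ≠ t →
          ∀ (i : Fin k) (b b' : Bool) (y z : diamV (Fin k) q),
          s = castV (Fin k) e3 (subEmbed (Fin k) (cImg h i b) q y) →
          t = castV (Fin k) e3 (subEmbed (Fin k) (cImg h i b') q z) →
          s = U b ∧ t = U b' := by
        intro s hs t ht hst i b b' y z hsy htz
        have hdist := hsep s hs t ht hst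
        obtain ⟨wy, hwy, hwy'⟩ := keyM i b y
        obtain ⟨wz, hwz, hwz'⟩ := keyM i b' z
        have hdle : (diamG (Fin k) (j + (q + 1))).dist s t ≤
            wy.length + wz.length := by
          rw [hsy, htz, castV_dist]
          calc (diamG (Fin k) ((j + 1) + q)).dist _ _
              ≤ (wy.append wz.reverse).length := SimpleGraph.dist_le _
            _ = wy.length + wz.length := by
                rw [SimpleGraph.Walk.length_append,
                  SimpleGraph.Walk.length_reverse]
        have h2q : 1 ≤ 2 ^ q := Nat.one_le_two_pow
        have hy : y = diamOrig (Fin k) q true := by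
          by_contra hy
          have := hwy' hy
          rw [pow_succ] at hdist
          omega
        have hz : z = diamOrig (Fin k) q true := by
          by_contra hz
          have := hwz' hz
          rw [pow_succ] at hdist
          omega
        subst hy; subst hz
        constructor
        · rw [hsy, hU]
          congr 1
          exact subEmbed_orig (cImg h i b) q true
        · rw [htz, hU]
          congr 1
          exact subEmbed_orig (cImg h i b') q true
      choose I B Y hIBY using cover
      by_cases htwo : ∃ s, ∃ hs : s ∈ S, ∃ t, ∃ ht : t ∈ S, s ≠ t ∧ I s hs = I t ht
      · obtain ⟨s, hs, t, ht, hst, hII⟩ := htwo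
        have hsy := hIBY s hs
        have htz := hIBY t ht
        rw [hII] at hsy
        obtain ⟨hsU, htU⟩ := branch2 s hs t ht hst (I t ht) (B s hs) (B t ht)
          (Y s hs) (Y t ht) hsy htz
        have hUb : ∀ b : Bool, U b ∈ S := by
          intro b
          have hBst : B s hs ≠ B t ht := by
            intro hbb
            exact hst (by rw [hsU, htU, hbb])
          by_cases hb : b = B s hs
          · rw [hb]; exact hsU ▸ hs
          · have hbool : ∀ x y z : Bool, z ≠ x → x ≠ y → z = y := by decide
            rw [hbool (B s hs) (B t ht) b hb hBst]
            exact htU ▸ ht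
        have hSsub : S ⊆ {U true, U false} := by
          intro z hz
          have hzy := hIBY z hz
          have hd := keyE (I z hz) (B z hz) (Y z hz)
          rw [← hzy] at hd
          by_cases hzU : z = U (B z hz)
          · cases hB : B z hz
            · rw [hB] at hzU; exact Or.inr hzU
            · rw [hB] at hzU; exact Or.inl hzU
          · exfalso
            have := hsep z hz (U (B z hz)) (hUb (B z hz)) hzU
            have h2q : 1 ≤ 2 ^ q := Nat.one_le_two_pow
            rw [pow_succ] at this
            omega
        rw [Nat.card_coe_set_eq]
        have hcard2 : ({U true, U false} : Set (diamV (Fin k) (j + (q + 1)))).ncard ≤ 2 := by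
          have h1 := Set.ncard_insert_le (U true)
            ({U false} : Set (diamV (Fin k) (j + (q + 1))))
          rw [Set.ncard_singleton] at h1
          omega
        have := Set.ncard_le_ncard hSsub (Set.toFinite _)
        have : S.ncard ≤ 2 := by omega
        have hfin : k * (2 * k) ^ (q + 1 - (q + 1)) = k := by rw [Nat.sub_self, pow_zero, mul_one]
        omega
      · -- at most one point per branch
        push_neg at htwo
        have hinj : Function.Injective (fun s : S => I s.1 s.2) := by
          intro s t hIst
          by_contra hne
          exact absurd hIst (htwo s.1 s.2 t.1 t.2
            (fun hval => hne (Subtype.ext hval)))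
        have hcard := Nat.card_le_card_of_injective _ hinj
        simp only [Nat.card_eq_fintype_card, Fintype.card_fin] at hcard
        have hfin : k * (2 * k) ^ (q + 1 - (q + 1)) = k := by rw [Nat.sub_self, pow_zero, mul_one]
        omega

end Main

theorem separated_set_in_subdiamond_card_le (k : ℕ) (hk : 2 ≤ k) {j q : ℕ}
    {u v : diamV (Fin k) j} (h : (diamG (Fin k) j).Adj u v)
    (p : ℕ) (hpq : p ≤ q) (S : Set (diamV (Fin k) (j + q)))
    (hsub : S ⊆ Set.range (subEmbed (Fin k) h q))
    (hsep : ∀ x ∈ S, ∀ y ∈ S, x ≠ y → 2 ^ p ≤ (diamG (Fin k) (j + q)).dist x y) :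
    Nat.card S ≤ k * (2 * k) ^ (q - p) :=
  main_lemma k hk q p hpq j u v h S hsub hsep
end

section
/- A subdiamond of D_{m,k} of diameter 2^p contains at most k vertices of any 2^p-separated set. -/
open SimpleGraph

section Test
variable {ι : Type}

lemma edge_cases {V : Type} {G : SimpleGraph V} (e : G.edgeSet) :
    ∃ (a b : V) (hab : G.Adj a b), e = ⟨s(a, b), G.mem_edgeSet.mpr hab⟩ := by
  obtain ⟨p, hp⟩ := e
  revert hp
  induction p using Sym2.ind with
  | _ a b => exact fun hp => ⟨a, b, G.mem_edgeSet.mp hp, rfl⟩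

lemma double_walk [Inhabited ι] {n : ℕ} {u v : diamV ι n}
    (W : (diamG ι n).Walk u v) :
    ∃ W' : (diamG ι (n+1)).Walk (Sum.inl u) (Sum.inl v), W'.length = 2 * W.length := by
  induction W with
  | nil => exact ⟨.nil, rfl⟩
  | cons h W ih =>
      obtain ⟨W', hW'⟩ := ih
      refine ⟨.cons (diamMid_adj_left ι h default) (.cons (diamMid_adj_right ι h default) W'), ?_⟩
      show W'.length + 1 + 1 = 2 * (W.length + 1)
      omega

end Test
section Test
variable {ι : Type}

def col {ι : Type} {n : ℕ} : diamV ι (n+1) → ZMod 2 := Sum.elim (fun _ => 0) (fun _ => 1)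

lemma col_walk {n : ℕ} {x y : diamV ι (n+1)} (W : (diamG ι (n+1)).Walk x y) :
    (W.length : ZMod 2) = col y - col x := by
  induction W with
  | nil => simp
  | @cons a b c h W ih =>
      have hab : col b - col (a : diamV ι (n+1)) = 1 := by
        rcases a with u | m <;> rcases b with u' | m'
        · exact h.elim
        · show (1 : ZMod 2) - 0 = 1; decide
        · show (0 : ZMod 2) - 1 = 1; decide
        · exact h.elim
      simp only [SimpleGraph.Walk.length_cons, Nat.cast_add, Nat.cast_one, ih]
      linear_combination -hab

end Test
section Test2
variable {ι : Type}

lemma walk_bound [Inhabited ι] :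
    ∀ n (v x y : diamV ι n), (diamG ι n).Adj x y →
      (∃ W : (diamG ι n).Walk x v, W.length ≤ 2 ^ n - 1) ∨
      (∃ W : (diamG ι n).Walk y v, W.length ≤ 2 ^ n - 1) := by
  intro n
  induction n with
  | zero =>
      intro v x y hxy
      have hne : x ≠ y := hxy.ne
      by_cases hvx : v = x
      · subst hvx; exact Or.inl ⟨.nil, by simp⟩
      · have hvy : v = y := by
          revert hne hvx
          show x ≠ y → ¬ v = x → v = y
          rcases (v : Bool) with _ | _ <;> rcases (x : Bool) with _ | _ <;>
            rcases (y : Bool) with _ | _ <;> simp <;> intros <;> rfl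
        subst hvy; exact Or.inr ⟨.nil, by simp⟩
  | succ n ih =>
      have h1 : 1 ≤ 2 ^ n := Nat.one_le_two_pow
      have h2 : 2 ^ (n+1) = 2 * 2 ^ n := by ring
      have midwalk : ∀ (a b : diamV ι n) (hab : (diamG ι n).Adj a b) (i : ι) (w : diamV ι n),
          ∃ W : (diamG ι (n+1)).Walk (diamMid ι hab i) (Sum.inl w),
            W.length ≤ 2 ^ (n+1) - 1 := by
        intro a b hab i w
        rcases ih w a b hab with ⟨W, hW⟩ | ⟨W, hW⟩
        · obtain ⟨W', hW'⟩ := double_walk W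
          exact ⟨.cons (diamMid_adj_left ι hab i).symm W', by
            show W'.length + 1 ≤ _; omega⟩
        · obtain ⟨W', hW'⟩ := double_walk W
          exact ⟨.cons (diamMid_adj_right ι hab i) W', by
            show W'.length + 1 ≤ _; omega⟩
      have inlwalk : ∀ (u a b : diamV ι n) (hab : (diamG ι n).Adj a b) (i : ι),
          ∃ W : (diamG ι (n+1)).Walk (Sum.inl u) (diamMid ι hab i),
            W.length ≤ 2 ^ (n+1) - 1 := by
        intro u a b hab i
        rcases ih u a b hab with ⟨W, hW⟩ | ⟨W, hW⟩
        · obtain ⟨W', hW'⟩ := double_walk W.reverse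
          exact ⟨W'.concat (diamMid_adj_left ι hab i), by
            have := W.length_reverse
            exact (SimpleGraph.Walk.length_concat _ _).trans_le (by omega)⟩
        · obtain ⟨W', hW'⟩ := double_walk W.reverse
          exact ⟨W'.concat (diamMid_adj_right ι hab i).symm, by
            have := W.length_reverse
            exact (SimpleGraph.Walk.length_concat _ _).trans_le (by omega)⟩
      rintro v (u | ⟨e, i⟩) (u' | ⟨e', i'⟩) hxy
      · exact hxy.elim
      · obtain ⟨a, b, hab, rfl⟩ := edge_cases e'
        rcases v with w | ⟨f, j⟩
        · exact Or.inr (midwalk a b hab i' w)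
        · obtain ⟨a', b', hab', rfl⟩ := edge_cases f
          exact Or.inl (inlwalk u a' b' hab' j)
      · obtain ⟨a, b, hab, rfl⟩ := edge_cases e
        rcases v with w | ⟨f, j⟩
        · exact Or.inl (midwalk a b hab i w)
        · obtain ⟨a', b', hab', rfl⟩ := edge_cases f
          exact Or.inr (inlwalk u' a' b' hab' j)
      · exact hxy.elim

lemma exists_adj [Inhabited ι] : ∀ n (x : diamV ι n), ∃ y, (diamG ι n).Adj x y := by
  intro n
  induction n with
  | zero =>
      intro x
      refine ⟨!(x : Bool), ?_⟩
      show x ≠ !(x : Bool)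
      rcases (x : Bool) with _ | _ <;> simp <;> exact fun h => Bool.noConfusion h
  | succ n ih =>
      rintro (u | ⟨e, i⟩)
      · obtain ⟨u', hu'⟩ := ih u
        exact ⟨diamMid ι hu' default, diamMid_adj_left ι hu' default⟩
      · obtain ⟨a, b, hab, rfl⟩ := edge_cases e
        exact ⟨Sum.inl b, diamMid_adj_right ι hab i⟩

lemma exists_walk_le [Inhabited ι] (n : ℕ) (x y : diamV ι n) :
    ∃ W : (diamG ι n).Walk x y, W.length ≤ 2 ^ n := by
  have h1 : 1 ≤ 2 ^ n := Nat.one_le_two_pow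
  obtain ⟨z, hz⟩ := exists_adj n y
  rcases walk_bound n x y z hz with ⟨W, hW⟩ | ⟨W, hW⟩
  · exact ⟨W.reverse, by simp only [SimpleGraph.Walk.length_reverse]; omega⟩
  · exact ⟨(W.reverse).concat hz.symm, by
      simp only [SimpleGraph.Walk.length_concat, SimpleGraph.Walk.length_reverse]; omega⟩

lemma reachable_all [Inhabited ι] (n : ℕ) (x y : diamV ι n) :
    (diamG ι n).Reachable x y :=
  ⟨(exists_walk_le n x y).choose⟩

lemma dist_le_pow [Inhabited ι] (n : ℕ) (x y : diamV ι n) :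
    (diamG ι n).dist x y ≤ 2 ^ n := by
  obtain ⟨W, hW⟩ := exists_walk_le n x y
  exact le_trans (SimpleGraph.dist_le W) hW

end Test2
section Test3
variable {ι : Type}

lemma exists_inl_mem {n : ℕ} (e : (diamG ι (n+1)).edgeSet) :
    ∃ u : diamV ι n, Sum.inl u ∈ (e.1 : Sym2 (diamV ι (n+1))) := by
  obtain ⟨a, b, hab, rfl⟩ := edge_cases e
  rcases a with u | m <;> rcases b with u' | m'
  · exact hab.elim
  · exact ⟨u, Sym2.mem_mk_left _ _⟩
  · exact ⟨u', Sym2.mem_mk_right _ _⟩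
  · exact hab.elim

noncomputable def inlEnd {n : ℕ} (e : (diamG ι (n+1)).edgeSet) : diamV ι n :=
  (exists_inl_mem e).choose

lemma inlEnd_mem {n : ℕ} (e : (diamG ι (n+1)).edgeSet) :
    Sum.inl (inlEnd e) ∈ (e.1 : Sym2 (diamV ι (n+1))) :=
  (exists_inl_mem e).choose_spec

lemma mid_adj {n : ℕ} (e : (diamG ι n).edgeSet) (i : ι) (x : diamV ι n)
    (hx : x ∈ (e.1 : Sym2 (diamV ι n))) :
    (diamG ι (n+1)).Adj (Sum.inr (e, i)) (Sum.inl x) := hx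

lemma finite_diamV (ι : Type) [Finite ι] : ∀ n, Finite (diamV ι n) := by
  intro n
  induction n with
  | zero => exact inferInstanceAs (Finite Bool)
  | succ n ih =>
      haveI := ih
      exact inferInstanceAs (Finite (_ ⊕ (_ × _)))

end Test3
theorem separated_set_in_diamond_card_le (k p : ℕ) (hk : 2 ≤ k)
    (S : Set (diamV (Fin k) p))
    (hsep : ∀ x ∈ S, ∀ y ∈ S, x ≠ y → 2 ^ p ≤ (diamG (Fin k) p).dist x y) :
    Nat.card S ≤ k := by
  haveI : Inhabited (Fin k) := ⟨⟨0, by omega⟩⟩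
  induction p with
  | zero =>
      haveI := finite_diamV (Fin k) 0
      have h1 : Nat.card S ≤ Nat.card (diamV (Fin k) 0) :=
        Nat.card_le_card_of_injective _ Subtype.val_injective
      have h2 : Nat.card (diamV (Fin k) 0) = 2 := by
        have : Nat.card Bool = 2 := by simp [Nat.card_eq_fintype_card]
        exact this
      omega
  | succ p ih =>
      haveI := finite_diamV (Fin k) p
      haveI := finite_diamV (Fin k) (p + 1)
      have hpow : (2:ℕ) ^ (p+1) = 2 * 2 ^ p := by ring
      have hpow1 : (1:ℕ) ≤ 2 ^ p := Nat.one_le_two_pow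
      -- distances are exactly 2^(p+1)
      have hdist : ∀ x ∈ S, ∀ y ∈ S, x ≠ y →
          (diamG (Fin k) (p+1)).dist x y = 2 ^ (p+1) :=
        fun x hx y hy hxy => le_antisymm (dist_le_pow (p+1) x y) (hsep x hx y hy hxy)
      -- no mixed pairs
      have hnomix : ∀ u m, Sum.inl u ∈ S → Sum.inr m ∈ S → False := by
        intro u m hu hm
        have hne : (Sum.inl u : diamV (Fin k) (p+1)) ≠ Sum.inr m := by simp
        have hd := hdist _ hu _ hm hne
        obtain ⟨W, hW⟩ :=
          (reachable_all (p+1) (Sum.inl u) (Sum.inr m)).exists_walk_length_eq_dist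
        have hcol := col_walk W
        rw [hW, hd] at hcol
        have h0 : ((2 ^ (p+1) : ℕ) : ZMod 2) = 0 := by
          rw [ZMod.natCast_eq_zero_iff]
          exact dvd_pow_self 2 (Nat.succ_ne_zero p)
        rw [h0] at hcol
        have hcol' : (0 : ZMod 2) = 1 - 0 := hcol
        exact absurd hcol' (by decide)
      by_cases hex : ∃ m, Sum.inr m ∈ S
      · -- all elements are midpoints
        have hall : ∀ x ∈ S, ∃ m, x = Sum.inr m := by
          rintro (u | m) hx
          · exact absurd (hnomix u hex.choose hx hex.choose_spec) not_false
          · exact ⟨m, rfl⟩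
        clear hnomix hex
        rcases p with _ | q
        ·
          -- level 1 : all midpoints share the unique edge of D_0
          have hbool : ∀ e : (diamG (Fin k) 0).edgeSet,
              (e : Sym2 (diamV (Fin k) 0)) = s(false, true) := by
            intro e
            obtain ⟨a, b, hab, rfl⟩ := edge_cases e
            have hne : a ≠ b := hab.ne
            revert hne
            rcases (a : Bool) with _ | _ <;> rcases (b : Bool) with _ | _ <;> intro hne
            · exact absurd rfl hne
            · rfl
            · exact Sym2.eq_swap
            · exact absurd rfl hne
          have hginj : Function.Injective
              (fun s : S => (Sum.elim (fun _ => (default : Fin k)) Prod.snd) s.1) := by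
            rintro ⟨x, hx⟩ ⟨y, hy⟩ hxy
            obtain ⟨⟨e, i⟩, rfl⟩ := hall x hx
            obtain ⟨⟨e', i'⟩, rfl⟩ := hall y hy
            have hi : i = i' := hxy
            have he : e = e' := Subtype.ext (by rw [hbool e, hbool e'])
            subst hi; subst he; rfl
          have := Nat.card_le_card_of_injective _ hginj
          simpa [Nat.card_eq_fintype_card] using this
        ·
          -- level q+2 : map each midpoint to the `inl` endpoint of its edge
          have hq2 : (2:ℕ) ^ (q+2) = 2 * 2 ^ (q+1) := by ring
          have hq1 : (2:ℕ) ^ (q+1) = 2 * 2 ^ q := by ring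
          have hq0 : (1:ℕ) ≤ 2 ^ q := Nat.one_le_two_pow
          have claim : ∀ (e e' : (diamG (Fin k) (q+1)).edgeSet) (i i' : Fin k),
              Sum.inr (e, i) ∈ S → Sum.inr (e', i') ∈ S →
              (Sum.inr (e, i) : diamV (Fin k) (q+2)) ≠ Sum.inr (e', i') →
              2 ^ (q+1) ≤ (diamG (Fin k) (q+1)).dist
                  (Sum.inl (inlEnd e)) (Sum.inl (inlEnd e')) ∧
                (Sum.inl (inlEnd e) : diamV (Fin k) (q+1)) ≠ Sum.inl (inlEnd e') := by
            intro e e' i i' he hi hne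
            have hd := hdist _ he _ hi hne
            have hee' : e ≠ e' := by
              rintro rfl
              have := SimpleGraph.dist_le
                (SimpleGraph.Walk.cons (mid_adj e i _ (inlEnd_mem e))
                  (SimpleGraph.Walk.cons (mid_adj e i' _ (inlEnd_mem e)).symm
                    SimpleGraph.Walk.nil))
              rw [hd] at this
              change _ ≤ 0 + 1 + 1 at this
              omega
            obtain ⟨W, hW⟩ := (reachable_all (q+1) (Sum.inl (inlEnd e))
              (Sum.inl (inlEnd e'))).exists_walk_length_eq_dist
            obtain ⟨W', hW'⟩ := double_walk W
            have hle := SimpleGraph.dist_le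
              (SimpleGraph.Walk.cons (mid_adj e i _ (inlEnd_mem e))
                (W'.concat (mid_adj e' i' _ (inlEnd_mem e')).symm))
            rw [hd] at hle
            replace hle : _ ≤ W'.length + 1 + 1 :=
              hle.trans_eq (congrArg (· + 1) (SimpleGraph.Walk.length_concat _ _))
            -- hle : 2^(q+2) ≤ 2 * dist + 1 + 1
            have hcol := col_walk W
            rw [hW] at hcol
            have heven : (2:ℕ) ∣ (diamG (Fin k) (q+1)).dist
                (Sum.inl (inlEnd e)) (Sum.inl (inlEnd e')) := by
              rw [← ZMod.natCast_eq_zero_iff]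
              rw [hcol]
              show (0 : ZMod 2) - 0 = 0
              decide
            obtain ⟨c, hc⟩ := heven
            have hge : 2 ^ (q+1) ≤ (diamG (Fin k) (q+1)).dist
                (Sum.inl (inlEnd e)) (Sum.inl (inlEnd e')) := by omega
            refine ⟨hge, fun hxy => ?_⟩
            rw [hxy] at hge
            have hge := hge.trans_eq SimpleGraph.dist_self
            omega
          have hinj : Set.InjOn
              (Sum.elim (fun _ => diamBottom (Fin k) (q+1))
                (fun m => Sum.inl (inlEnd m.1)) : diamV (Fin k) (q+2) → _) S := by
            intro x hx y hy hxy
            by_contra hne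
            obtain ⟨⟨e, i⟩, rfl⟩ := hall x hx
            obtain ⟨⟨e', i'⟩, rfl⟩ := hall y hy
            exact (claim e e' i i' hx hy hne).2 hxy
          refine (Nat.card_image_of_injOn hinj).symm.trans_le ?_
          apply ih
          rintro u ⟨x, hx, rfl⟩ v ⟨y, hy, rfl⟩ huv
          have hxy : x ≠ y := fun h => huv (by rw [h])
          obtain ⟨⟨e, i⟩, rfl⟩ := hall x hx
          obtain ⟨⟨e', i'⟩, rfl⟩ := hall y hy
          exact (claim e e' i i' hx hy (by exact fun h => hxy h)).1
      · -- all elements are original vertices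
        have hall : ∀ x ∈ S, ∃ u, x = Sum.inl u := by
          rintro (u | m) hx
          · exact ⟨u, rfl⟩
          · exact absurd ⟨m, hx⟩ hex
        have hinj : Set.InjOn
            ((Sum.elim id (fun _ => diamBottom (Fin k) p)) :
              diamV (Fin k) (p+1) → diamV (Fin k) p) S := by
          intro x hx y hy hxy
          obtain ⟨u, rfl⟩ := hall x hx
          obtain ⟨v, rfl⟩ := hall y hy
          have : u = v := hxy
          rw [this]
        refine (Nat.card_image_of_injOn hinj).symm.trans_le ?_
        apply ih
        rintro u ⟨x, hx, rfl⟩ v ⟨y, hy, rfl⟩ huv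
        obtain ⟨xu, rfl⟩ := hall x hx
        obtain ⟨yu, rfl⟩ := hall y hy
        have hne : (Sum.inl xu : diamV (Fin k) (p+1)) ≠ Sum.inl yu := by
          intro h
          exact huv (by rw [h])
        have hd := hsep _ hx _ hy hne
        obtain ⟨W, hW⟩ := (reachable_all p xu yu).exists_walk_length_eq_dist
        obtain ⟨W', hW'⟩ := double_walk W
        have hle := SimpleGraph.dist_le W'
        rw [hW', hW] at hle
        show 2 ^ p ≤ (diamG (Fin k) p).dist xu yu
        omega
end

section
/- Let Z_d be the set of all vertices of generation number d in D_{m,k}. Then every connected component of the graph D_{m,k} with Z_d deleted has diameter (in the shortest path metric of D_{m,k}) strictly less than 2^d. -/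
open SimpleGraph

section AuxDev

variable (ι : Type) (j : ℕ)

/-- The set of deleted vertices: generation-`q+1` midpoints lifted. -/
def Zset (q : ℕ) : Set (diamV ι (j + 1 + q)) :=
  Set.range (fun w : ((diamG ι j).edgeSet × ι) => diamLift ι (j + 1) q (Sum.inr w))

lemma mem_Zset_succ_inl {q : ℕ} (a : diamV ι (j + 1 + q)) :
    (Sum.inl a : diamV ι (j + 1 + (q + 1))) ∈ Zset ι j (q + 1) ↔ a ∈ Zset ι j q := by
  constructor
  · rintro ⟨w, hw⟩
    exact ⟨w, Sum.inl.inj hw⟩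
  · rintro ⟨w, hw⟩
    exact ⟨w, congrArg Sum.inl hw⟩

lemma inr_not_mem_Zset_succ {q : ℕ} (w : (diamG ι (j + 1 + q)).edgeSet × ι) :
    (Sum.inr w : diamV ι (j + 1 + (q + 1))) ∉ Zset ι j (q + 1) := by
  rintro ⟨w', hw'⟩
  simp [diamLift] at hw'

lemma Zset_indep {q : ℕ} {a b : diamV ι (j + 1 + q)} (ha : a ∈ Zset ι j q)
    (hb : b ∈ Zset ι j q) (hadj : (diamG ι (j + 1 + q)).Adj a b) : False := by
  obtain ⟨w, rfl⟩ := ha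
  obtain ⟨w', rfl⟩ := hb
  cases q with
  | zero => exact hadj
  | succ q => exact hadj

lemma eq_or_adj_of_mem_edge {V : Type} (G : SimpleGraph V) (e : G.edgeSet) {a b : V}
    (ha : a ∈ (e.1 : Sym2 V)) (hb : b ∈ (e.1 : Sym2 V)) : a = b ∨ G.Adj a b := by
  obtain ⟨e, he⟩ := e
  induction e using Sym2.ind with
  | _ c d =>
    rw [SimpleGraph.mem_edgeSet] at he
    simp only [Sym2.mem_iff] at ha hb
    rcases ha with rfl | rfl <;> rcases hb with rfl | rfl
    · exact Or.inl rfl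
    · exact Or.inr he
    · exact Or.inr he.symm
    · exact Or.inl rfl

/-- Doubling a walk into the next diamond. -/
def doubleWalk (i : ι) {n : ℕ} : {a b : diamV ι n} → (diamG ι n).Walk a b →
    (diamG ι (n + 1)).Walk (Sum.inl a) (Sum.inl b)
  | _, _, .nil => .nil
  | _, _, .cons h W =>
      .cons (diamMid_adj_left ι h i) (.cons (diamMid_adj_right ι h i) (doubleWalk i W))

lemma doubleWalk_length (i : ι) {n : ℕ} {a b : diamV ι n} (W : (diamG ι n).Walk a b) :
    (doubleWalk ι i W).length = 2 * W.length := by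
  induction W with
  | nil => rfl
  | cons h W ih =>
    show (doubleWalk ι i (.cons h W)).length = _
    simp only [doubleWalk, SimpleGraph.Walk.length_cons, ih]
    show (doubleWalk ι i W).length + 1 + 1 = 2 * (W.length + 1)
    rw [ih]; ring

/-- `a` is a projection of `u` to the previous level. -/
def IsProj (q : ℕ) (u : diamV ι (j + 1 + (q + 1))) (a : diamV ι (j + 1 + q)) : Prop :=
  u = Sum.inl a ∨ ∃ (e : (diamG ι (j + 1 + q)).edgeSet) (i : ι),
    u = Sum.inr (e, i) ∧ a ∈ (e.1 : Sym2 (diamV ι (j + 1 + q)))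

lemma proj_adj (q : ℕ) (u w : ↥((Zset ι j (q + 1))ᶜ))
    (h : ((diamG ι (j + 1 + (q + 1))).induce (Zset ι j (q + 1))ᶜ).Adj u w)
    (a : diamV ι (j + 1 + q)) (ha : a ∉ Zset ι j q) (hp : IsProj ι j q u.1 a) :
    ∃ b, ∃ (hb : b ∉ Zset ι j q), IsProj ι j q w.1 b ∧
      ((diamG ι (j + 1 + q)).induce (Zset ι j q)ᶜ).Reachable ⟨a, ha⟩ ⟨b, hb⟩ := by
  obtain ⟨u, hu⟩ := u
  obtain ⟨w, hw⟩ := w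
  have hadj : (diamG ι (j + 1 + (q + 1))).Adj u w := h
  rcases u with c | ⟨e, i⟩ <;> rcases w with d | ⟨f, i'⟩
  · exact absurd hadj (by exact id)
  · -- u = inl c, w = inr (f, i')
    have hc : c ∈ (f.1 : Sym2 (diamV ι (j + 1 + q))) := hadj
    rcases hp with hp | ⟨e, i, hp, _⟩
    · cases Sum.inl.inj hp
      exact ⟨a, ha, Or.inr ⟨f, i', rfl, hc⟩, .refl _⟩
    · exact absurd hp (by simp)
  · -- u = inr (e, i), w = inl d
    have hd : d ∈ (e.1 : Sym2 (diamV ι (j + 1 + q))) := hadj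
    have hdZ : d ∉ Zset ι j q := fun hmem => hw ((mem_Zset_succ_inl ι j d).mpr hmem)
    rcases hp with hp | ⟨e', i'', hp, hmem⟩
    · exact absurd hp (by simp)
    · obtain ⟨he, -⟩ := Prod.mk.injEq .. ▸ Sum.inr.inj hp
      cases he
      refine ⟨d, hdZ, Or.inl rfl, ?_⟩
      rcases eq_or_adj_of_mem_edge _ e hmem hd with rfl | hab
      · exact .refl _
      · exact SimpleGraph.Adj.reachable (by exact hab)
  · exact absurd hadj (by exact id)

lemma proj_walk (q : ℕ) {u v : ↥((Zset ι j (q + 1))ᶜ)}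
    (W : ((diamG ι (j + 1 + (q + 1))).induce (Zset ι j (q + 1))ᶜ).Walk u v) :
    ∀ a (ha : a ∉ Zset ι j q), IsProj ι j q u.1 a →
    ∃ b, ∃ (hb : b ∉ Zset ι j q), IsProj ι j q v.1 b ∧
      ((diamG ι (j + 1 + q)).induce (Zset ι j q)ᶜ).Reachable ⟨a, ha⟩ ⟨b, hb⟩ := by
  induction W with
  | nil => exact fun a ha hp => ⟨a, ha, hp, .refl _⟩
  | cons h W ih =>
    intro a ha hp
    obtain ⟨b, hb, hpb, hr⟩ := proj_adj ι j _ _ _ h a ha hp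
    obtain ⟨c, hc, hpc, hr'⟩ := ih b hb hpb
    exact ⟨c, hc, hpc, hr.trans hr'⟩

end AuxDev
section MainDev

variable (ι : Type) (j : ℕ)

lemma exists_endpoint_not_Z (q : ℕ) (e : (diamG ι (j + 1 + q)).edgeSet) :
    ∃ a, a ∈ (e.1 : Sym2 (diamV ι (j + 1 + q))) ∧ a ∉ Zset ι j q := by
  obtain ⟨e, he⟩ := e
  induction e using Sym2.ind with
  | _ c d =>
    rw [SimpleGraph.mem_edgeSet] at he
    by_cases hc : c ∈ Zset ι j q
    · by_cases hd : d ∈ Zset ι j q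
      · exact (Zset_indep ι j hc hd he).elim
      · exact ⟨d, by simp, hd⟩
    · exact ⟨c, by simp, hc⟩

lemma main_bound [Nontrivial ι] : ∀ (q : ℕ) (x y : diamV ι (j + 1 + q))
    (hx : x ∉ Zset ι j q) (hy : y ∉ Zset ι j q),
    ((diamG ι (j + 1 + q)).induce (Zset ι j q)ᶜ).Reachable ⟨x, hx⟩ ⟨y, hy⟩ →
    ∃ W : (diamG ι (j + 1 + q)).Walk x y, W.length + 2 ≤ 2 ^ (q + 1) := by
  intro q
  induction q with
  | zero =>
    intro x y hx hy hreach
    have noedge : ∀ u v : ↥((Zset ι j 0)ᶜ),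
        ¬ ((diamG ι (j + 1 + 0)).induce (Zset ι j 0)ᶜ).Adj u v := by
      rintro ⟨(c | w), hu⟩ ⟨(d | w'), hv⟩ h
      · exact h
      · exact hv ⟨w', rfl⟩
      · exact hu ⟨w, rfl⟩
      · exact hu ⟨w, rfl⟩
    have key : ∀ u v : ↥((Zset ι j 0)ᶜ),
        ((diamG ι (j + 1 + 0)).induce (Zset ι j 0)ᶜ).Walk u v → u = v := by
      intro u v W
      induction W with
      | nil => rfl
      | cons h _ _ => exact (noedge _ _ h).elim
    obtain ⟨W⟩ := hreach
    have hxy : x = y := congrArg Subtype.val (key _ _ W)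
    subst hxy
    exact ⟨.nil, by norm_num⟩
  | succ q ih =>
    intro x y hx hy hreach
    obtain ⟨i₀⟩ : Nonempty ι := inferInstance
    -- projection of the start
    have hstart : ∃ a, ∃ (ha : a ∉ Zset ι j q), IsProj ι j q x a ∧
        ∃ W₁ : (diamG ι (j + 1 + (q + 1))).Walk x (Sum.inl a), W₁.length ≤ 1 := by
      rcases x with c | ⟨e, i⟩
      · exact ⟨c, fun h => hx ((mem_Zset_succ_inl ι j c).mpr h), Or.inl rfl, .nil, Nat.zero_le _⟩
      · obtain ⟨a, hmem, ha⟩ := exists_endpoint_not_Z ι j q e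
        have hadj : (diamG ι (j + 1 + (q + 1))).Adj (Sum.inr (e, i)) (Sum.inl a) := hmem
        exact ⟨a, ha, Or.inr ⟨e, i, rfl, hmem⟩, .cons hadj .nil, Nat.le_refl 1⟩
    obtain ⟨a, ha, hpa, W₁, hW₁⟩ := hstart
    obtain ⟨Wr⟩ := hreach
    obtain ⟨b, hb, hpb, hr⟩ := proj_walk ι j q Wr a ha hpa
    obtain ⟨W₂, hW₂⟩ := ih a b ha hb hr
    -- walk from `inl b` to `y`
    have hend : ∃ W₃ : (diamG ι (j + 1 + (q + 1))).Walk (Sum.inl b) y, W₃.length ≤ 1 := by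
      rcases hpb with hpb | ⟨e, i, hpb, hmem⟩
      · rw [show y = Sum.inl b from hpb]; exact ⟨.nil, Nat.zero_le _⟩
      · rw [show y = Sum.inr (e, i) from hpb]
        have hadj : (diamG ι (j + 1 + (q + 1))).Adj (Sum.inl b) (Sum.inr (e, i)) := hmem
        exact ⟨.cons hadj .nil, Nat.le_refl 1⟩
    obtain ⟨W₃, hW₃⟩ := hend
    refine ⟨W₁.append ((doubleWalk ι i₀ W₂).append W₃), ?_⟩
    have h1 : (W₁.append ((doubleWalk ι i₀ W₂).append W₃)).length =
        W₁.length + ((doubleWalk ι i₀ W₂).append W₃).length := SimpleGraph.Walk.length_append _ _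
    have h2 : ((doubleWalk ι i₀ W₂).append W₃).length =
        (doubleWalk ι i₀ W₂).length + W₃.length := SimpleGraph.Walk.length_append _ _
    rw [h1, h2, doubleWalk_length]
    have hpow : (2 : ℕ) ^ (q + 1 + 1) = 2 * 2 ^ (q + 1) := by ring
    omega

end MainDev
theorem components_after_deleting_generation (ι : Type) [Nontrivial ι] (j q : ℕ)
    (Z : Set (diamV ι (j + 1 + q)))
    (hZ : Z = Set.range (fun w : ((diamG ι j).edgeSet × ι) =>
      diamLift ι (j + 1) q (Sum.inr w)))
    (x y : diamV ι (j + 1 + q)) (hx : x ∉ Z) (hy : y ∉ Z)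
    (hreach : ((diamG ι (j + 1 + q)).induce Zᶜ).Reachable ⟨x, hx⟩ ⟨y, hy⟩) :
    (diamG ι (j + 1 + q)).dist x y < 2 ^ (q + 1) := by
  subst hZ
  obtain ⟨W, hW⟩ := main_bound ι j q x y hx hy hreach
  have hd := SimpleGraph.dist_le W
  omega
end
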